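/- arXiv:1511.08300 — 2 statements merged into one kernel-verified Lean document; each statement's English description precedes it below -/
import Mathlib

section
/- For |x| = 1, x ≠ -1, n ≥ 1 and α ∈ ℂ, the Taylor coefficient A_n(α,x) of ((1+xz)/(1-z))^α satisfies A_n(α,x) = α(1+x)·F(1-n, 1-α; 2; 1+x), where F is the Gaussian hypergeometric function (a terminating hypergeometric sum since 1-n is a nonpositive integer). -/
open Complex Finset FormalMultilinearSeries

namespace CoeffAux

noncomputable def Gp (μ : ℂ) (k : ℕ) : ℂ := ∏ i ∈ Finset.range k, (μ + i)

noncomputable def t (α ν : ℂ) (k : ℕ) : ℂ :=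
  Gp (1 - ν) k * Gp (1 - α) k / (Gp 2 k * (Nat.factorial k : ℂ))

noncomputable def s (α w : ℂ) (N : ℕ) : ℂ := ∑ k ∈ Finset.range N, t α N k * w ^ k

lemma Gp_succ (μ : ℂ) (k : ℕ) : Gp μ (k+1) = Gp μ k * (μ + k) := Finset.prod_range_succ _ _

lemma Gp_congr {μ ν : ℂ} (k : ℕ) (h : μ = ν) : Gp μ k = Gp ν k := by rw [h]

lemma Gp_shift (μ : ℂ) (k : ℕ) : Gp μ (k+1) = μ * Gp (μ+1) k := by
  unfold Gp
  rw [Finset.prod_range_succ']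
  simp only [Nat.cast_zero, add_zero]
  rw [mul_comm]
  congr 1
  apply Finset.prod_congr rfl
  intro i _
  push_cast
  ring

lemma Gp2_ne (k : ℕ) : Gp 2 k ≠ 0 := by
  apply Finset.prod_ne_zero_iff.mpr
  intro i _
  intro h
  have := congrArg Complex.re h
  simp at this
  linarith [Nat.cast_nonneg (α := ℝ) i]

lemma Gp_zero_of (m k : ℕ) (h : m < k) : Gp (-(m:ℂ)) k = 0 :=
  Finset.prod_eq_zero (i := m) (by simpa using h) (by simp)

lemma t_zero (α : ℂ) (N k : ℕ) (hN : 1 ≤ N) (hk : N ≤ k) : t α N k = 0 := by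
  unfold t
  rw [show (1 - (N:ℂ)) = -((N-1 : ℕ) : ℂ) by push_cast [Nat.cast_sub hN]; ring,
    Gp_zero_of _ _ (by omega), zero_mul, zero_div]

lemma t_zeroth (α ν : ℂ) : t α ν 0 = 1 := by simp [t, Gp]

lemma hR (m k : ℕ) : ((k:ℂ) - m) * Gp (-(m:ℂ)) k = -((m:ℂ) * Gp (1-(m:ℂ)) k) := by
  have h1 := Gp_succ (-(m:ℂ)) k
  have h2 := Gp_shift (-(m:ℂ)) k
  have h3 : Gp (-(m:ℂ)+1) k = Gp (1-(m:ℂ)) k := Gp_congr _ (by ring)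
  rw [h2, h3] at h1
  linear_combination -h1

lemma per_k (α : ℂ) (m k : ℕ) :
    ((m:ℂ)+2) * t α ((m:ℂ)+2) (k+1) - 2*((m:ℂ)+1) * t α ((m:ℂ)+1) (k+1) + (m:ℂ) * t α (m:ℂ) (k+1)
      = (α - ((m:ℂ)+1)) * t α ((m:ℂ)+1) k + (m:ℂ) * t α (m:ℂ) k := by
  have e2 : Gp (1 - ((m:ℂ)+2)) (k+1) = (-((m:ℂ)+1)) * Gp (-(m:ℂ)) k := by
    rw [Gp_congr (k+1) (show 1 - ((m:ℂ)+2) = -((m:ℂ)+1) by ring), Gp_shift]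
    rw [Gp_congr k (show -((m:ℂ)+1)+1 = -(m:ℂ) by ring)]
  have e1 : Gp (1 - ((m:ℂ)+1)) (k+1) = Gp (-(m:ℂ)) k * ((k:ℂ) - m) := by
    rw [Gp_congr (k+1) (show 1 - ((m:ℂ)+1) = -(m:ℂ) by ring), Gp_succ]
    ring
  have e1' : Gp (1 - ((m:ℂ)+1)) k = Gp (-(m:ℂ)) k := Gp_congr _ (by ring)
  have e0 : Gp (1 - (m:ℂ)) (k+1) = Gp (1-(m:ℂ)) k * (1 - (m:ℂ) + k) := Gp_succ _ _
  have eq : Gp (1 - α) (k+1) = Gp (1-α) k * (1 - α + k) := Gp_succ _ _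
  have eD : Gp 2 (k+1) = Gp 2 k * (2 + (k:ℂ)) := Gp_succ _ _
  have eF : ((Nat.factorial (k+1) : ℕ) : ℂ) = (Nat.factorial k : ℂ) * ((k:ℂ)+1) := by
    push_cast [Nat.factorial_succ]; ring
  have hG := Gp2_ne k
  have hk! : ((Nat.factorial k : ℕ) : ℂ) ≠ 0 := by
    exact_mod_cast Nat.cast_ne_zero.mpr (Nat.factorial_ne_zero k)
  have h2k : (2 + (k:ℂ)) ≠ 0 := by
    intro h; have := congrArg Complex.re h; simp at this; linarith [Nat.cast_nonneg (α := ℝ) k]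
  have hk1 : ((k:ℂ)+1) ≠ 0 := by
    intro h; have := congrArg Complex.re h; simp at this; linarith [Nat.cast_nonneg (α := ℝ) k]
  have hRmk := hR m k
  unfold t
  rw [e2, e1, e1', e0, eq, eD, eF]
  field_simp
  ring_nf
  linear_combination (((1-α+(k:ℂ))*(1-(m:ℂ)+k) - ((k:ℂ)+2)*((k:ℂ)+1)) * Gp (1-α) k) * hRmk


lemma srec (α w : ℂ) (m : ℕ) :
    ((m:ℂ)+2) * s α w (m+2) = (α*w - (w-2)*((m:ℂ)+1)) * s α w (m+1) + (w-1)*(m:ℂ)*s α w m := by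
  rcases m with _ | M
  · simp only [Nat.cast_zero, s, Finset.sum_range_succ, Finset.sum_range_one, t_zeroth]
    have h1 : t α ((2:ℕ):ℂ) 1 = (α - 1)/2 := by
      simp [t, Gp]
      field_simp
      ring
    push_cast at h1 ⊢
    rw [h1]
    ring
  · set ν : ℂ := ((M+1 : ℕ) : ℂ) with hν
    have c2 : ((M+1+2 : ℕ):ℂ) = ν + 2 := by rw [hν]; push_cast; ring
    have c1 : ((M+1+1 : ℕ):ℂ) = ν + 1 := by rw [hν]; push_cast; ring
    have hs2 : s α w (M+1+2) = ∑ k ∈ Finset.range (M+3), t α (ν+2) k * w ^ k := by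
      unfold s; rw [c2]
    have hs1 : s α w (M+1+1) = ∑ k ∈ Finset.range (M+3), t α (ν+1) k * w ^ k := by
      unfold s
      rw [c1, Finset.sum_range_succ (n := M+2)]
      have : t α (ν+1) (M+2) = 0 := by
        rw [← c1]; exact t_zero α (M+2) (M+2) (by omega) le_rfl
      rw [this]; ring
    have hs0 : s α w (M+1) = ∑ k ∈ Finset.range (M+3), t α ν k * w ^ k := by
      unfold s
      rw [Finset.sum_range_succ (n := M+2), Finset.sum_range_succ (n := M+1)]
      have h1 : t α ν (M+2) = 0 := t_zero α (M+1) (M+2) (by omega) (by omega)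
      have h2 : t α ν (M+1) = 0 := t_zero α (M+1) (M+1) (by omega) le_rfl
      rw [h1, h2]; ring
    have key : ∑ k ∈ Finset.range (M+3),
          (((ν+2) * t α (ν+2) k - 2*(ν+1) * t α (ν+1) k + ν * t α ν k) * w ^ k)
        = ∑ k ∈ Finset.range (M+3),
          (((α - (ν+1)) * t α (ν+1) k + ν * t α ν k) * w ^ (k+1)) := by
      rw [Finset.sum_range_succ'
        (fun k => ((ν+2) * t α (ν+2) k - 2*(ν+1) * t α (ν+1) k + ν * t α ν k) * w ^ k) (M+2)]
      rw [Finset.sum_range_succ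
        (fun k => ((α - (ν+1)) * t α (ν+1) k + ν * t α ν k) * w ^ (k+1)) (M+2)]
      have hz1 : t α (ν+1) (M+2) = 0 := by
        rw [← c1]; exact t_zero α (M+2) (M+2) (by omega) le_rfl
      have hz0 : t α ν (M+2) = 0 := t_zero α (M+1) (M+2) (by omega) (by omega)
      simp only [hz1, hz0, t_zeroth]
      have : ∀ k ∈ Finset.range (M+2),
          (((ν+2) * t α (ν+2) (k+1) - 2*(ν+1) * t α (ν+1) (k+1) + ν * t α ν (k+1)) * w ^ (k+1))
          = (((α - (ν+1)) * t α (ν+1) k + ν * t α ν k) * w ^ (k+1)) := by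
        intro k _
        have := per_k α (M+1) k
        rw [← hν] at this
        linear_combination w^(k+1) * this
      rw [Finset.sum_congr rfl this]
      ring
    have l2 : ∑ k ∈ Finset.range (M+3),
          (((ν+2) * t α (ν+2) k - 2*(ν+1) * t α (ν+1) k + ν * t α ν k) * w ^ k)
        = (ν+2) * (∑ k ∈ Finset.range (M+3), t α (ν+2) k * w ^ k)
          - 2*(ν+1) * (∑ k ∈ Finset.range (M+3), t α (ν+1) k * w ^ k)
          + ν * (∑ k ∈ Finset.range (M+3), t α ν k * w ^ k) := by
      rw [Finset.mul_sum, Finset.mul_sum, Finset.mul_sum, ← Finset.sum_sub_distrib,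
        ← Finset.sum_add_distrib]
      exact Finset.sum_congr rfl (fun k _ => by ring)
    have r2 : ∑ k ∈ Finset.range (M+3),
          (((α - (ν+1)) * t α (ν+1) k + ν * t α ν k) * w ^ (k+1))
        = w * ((α - (ν+1)) * (∑ k ∈ Finset.range (M+3), t α (ν+1) k * w ^ k)
          + ν * (∑ k ∈ Finset.range (M+3), t α ν k * w ^ k)) := by
      rw [Finset.mul_sum, Finset.mul_sum, ← Finset.sum_add_distrib, Finset.mul_sum]
      exact Finset.sum_congr rfl (fun k _ => by ring)
    rw [hs2, hs1, hs0] at *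
    linear_combination -l2 + key + r2

noncomputable def B (α x : ℂ) : ℕ → ℂ :=
  fun n => if n = 0 then 1 else α * (1+x) * s α (1+x) n

lemma s_one (α w : ℂ) : s α w 1 = 1 := by
  simp [s, t_zeroth]

lemma B_rec (α x : ℂ) (m : ℕ) :
    ((m:ℂ)+2) * B α x (m+2) + (x-1)*((m:ℂ)+1)*B α x (m+1) - x*(m:ℂ)*B α x m
      = α*(1+x)*(α*(1+x))*s α (1+x) (m+1) := by
  have h := srec α (1+x) m
  rcases m with _ | M
  · simp only [B, Nat.cast_zero]
    norm_num
    push_cast at h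
    linear_combination (α*(1+x)) * h
  · simp only [B, if_neg (by omega : ¬(M+1+2 = 0)), if_neg (by omega : ¬(M+1+1 = 0)),
      if_neg (by omega : ¬(M+1 = 0))]
    linear_combination (α*(1+x)) * h

lemma A_eq_B (α x : ℂ) (A : ℕ → ℂ) (hA0 : A 0 = 1) (hA1 : A 1 = α*(1+x))
    (hrec : ∀ m : ℕ, ((m:ℂ)+2)*A (m+2) + (x-1)*((m:ℂ)+1)*A (m+1) - x*(m:ℂ)*A m
      = α*(1+x)*A (m+1)) :
    ∀ n, A n = B α x n := by
  have key : ∀ n, A n = B α x n ∧ A (n+1) = B α x (n+1) := by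
    intro n
    induction n with
    | zero =>
      constructor
      · rw [hA0]; simp [B]
      · rw [hA1]; simp [B, s_one]
    | succ M ih =>
      refine ⟨ih.2, ?_⟩
      have h1 := hrec M
      have h2 := B_rec α x M
      have hne : ((M:ℂ)+2) ≠ 0 := by
        intro hc
        have := congrArg Complex.re hc
        simp at this
        linarith [Nat.cast_nonneg (α := ℝ) M]
      have hB1 : B α x (M+1) = α * (1+x) * s α (1+x) (M+1) := by
        simp [B]
      rw [ih.1, ih.2, hB1] at h1
      rw [hB1] at h2
      apply mul_left_cancel₀ hne
      linear_combination h1 - h2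
  exact fun n => (key n).1

end CoeffAux

theorem hrec_main (x α : ℂ) (hx : ‖x‖ = 1)
    (A : ℕ → ℂ)
    (hA : ∀ z : ℂ, ‖z‖ < 1 →
      HasSum (fun n : ℕ => A n * z ^ n) (((1 + x * z) / (1 - z)) ^ α)) :
    ∀ n : ℕ, ((n:ℂ)+1) * A (n+1) + (x-1)*(n:ℂ)*A n - x*((n-1 : ℕ):ℂ)*A (n-1)
      = α*(1+x)*A n := by
  set f : ℂ → ℂ := fun z => ((1 + x * z) / (1 - z)) ^ α with hf
  -- coefficients of ofScalars
  have hcoeff : ∀ (c : ℕ → ℂ) (n : ℕ), (ofScalars ℂ c).coeff n = c n := by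
    intro c n
    simp [FormalMultilinearSeries.coeff, FormalMultilinearSeries.ofScalars, Pi.one_def]
  -- power series at 0
  have hp : HasFPowerSeriesAt f (ofScalars ℂ A) 0 := by
    rw [hasFPowerSeriesAt_iff]
    filter_upwards [Metric.ball_mem_nhds (0:ℂ) one_pos] with z hz
    have hz' : ‖z‖ < 1 := by
      simpa [Complex.dist_eq] using hz
    have := hA z hz'
    simp only [hcoeff, smul_eq_mul, zero_add]
    convert this using 2 with n
    · rfl
    ring
  obtain ⟨R, hR⟩ := hp
  have hderiv : HasFPowerSeriesAt (fderiv ℂ f) (ofScalars ℂ A).derivSeries 0 :=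
    hR.fderiv.hasFPowerSeriesAt
  -- the coefficient of the derivative series
  have hdc : ∀ n : ℕ, ((ofScalars ℂ A).derivSeries.coeff n) 1 = ((n:ℂ)+1) * A (n+1) := by
    intro n
    have h1 : ((ofScalars ℂ A).derivSeries.coeff n) 1
        = (ofScalars ℂ A).derivSeries n (fun _ => (1:ℂ)) 1 := rfl
    rw [h1, derivSeries_apply_diag]
    have : (ofScalars ℂ A) (n+1) (fun _ => (1:ℂ)) = A (n+1) := by
      rw [ofScalars_apply_eq]
      simp
    rw [this]
    push_cast [nsmul_eq_mul]
    ring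
  -- HasSum for the derivative
  have hD : ∀ᶠ z in nhds (0:ℂ), HasSum (fun (n:ℕ) => ((n:ℂ)+1) * A (n+1) * z^n) (deriv f z) := by
    filter_upwards [hasFPowerSeriesAt_iff.mp hderiv] with z hz
    have h2 := hz.mapL (ContinuousLinearMap.apply ℂ ℂ (1:ℂ))
    simp only [ContinuousLinearMap.apply_apply, ContinuousLinearMap.smul_apply,
      zero_add] at h2
    have h3 : (fun (n:ℕ) => z^n • (((ofScalars ℂ A).derivSeries.coeff n) 1))
        = fun (n:ℕ) => ((n:ℂ)+1) * A (n+1) * z^n := by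
      funext n
      rw [hdc n]
      simp [smul_eq_mul]
      ring
    rw [h3] at h2
    rwa [fderiv_apply_one_eq_deriv] at h2
  -- functional equation
  have hfe : ∀ᶠ z in nhds (0:ℂ), (1+x*z)*(1-z) * deriv f z = α*(1+x) * f z := by
    filter_upwards [Metric.ball_mem_nhds (0:ℂ) (by norm_num : (0:ℝ) < 1/4)] with z hz
    have hz' : ‖z‖ < 1/4 := by simpa [Complex.dist_eq] using hz
    have hz1 : (1 - z) ≠ 0 := by
      intro h
      have : z = 1 := by linear_combination -h
      rw [this] at hz'
      simp at hz'
      norm_num at hz'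
    have habs1z : (3:ℝ)/4 ≤ ‖1 - z‖ := by
      have h1 : ‖(1-z)+z‖ ≤ ‖1-z‖ + ‖z‖ :=
        norm_add_le _ _
      simp only [sub_add_cancel, norm_one] at h1
      linarith
    have hnum : (1 + x*z) ≠ 0 := by
      intro h
      have : ‖x*z‖ = 1 := by
        have : x*z = -1 := by linear_combination h
        rw [this]
        simp
      rw [norm_mul, hx, one_mul] at this
      rw [this] at hz'
      norm_num at hz'
    set v : ℂ := (1+x*z)/(1-z) with hv
    have hvm1 : v - 1 = ((x+1)*z)/(1-z) := by
      rw [hv]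
      field_simp
      ring
    have hvabs : ‖v - 1‖ ≤ 2/3 := by
      rw [hvm1, norm_div, norm_mul]
      rw [div_le_iff₀ (by linarith)]
      have h1 : ‖x+1‖ ≤ 2 := by
        calc ‖x+1‖ ≤ ‖x‖ + ‖1‖ := norm_add_le x 1
        _ = 2 := by rw [hx]; simp; norm_num
      calc ‖x+1‖ * ‖z‖ ≤ 2 * (1/4) := by
            apply mul_le_mul h1 (le_of_lt hz') (norm_nonneg z) (by norm_num)
        _ ≤ 2/3 * ‖1-z‖ := by nlinarith
    have hslit : v ∈ Complex.slitPlane := by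
      rw [Complex.mem_slitPlane_iff]
      left
      have h1 : |(v - 1).re| ≤ ‖v-1‖ := Complex.abs_re_le_norm _
      have h2 : v.re = 1 + (v-1).re := by simp
      have := neg_abs_le (v-1).re
      linarith
    have hvne : v ≠ 0 := div_ne_zero hnum hz1
    have h1 : HasDerivAt (fun z : ℂ => 1 + x*z) x z := by
      simpa using ((hasDerivAt_id z).const_mul x).const_add 1
    have h2 : HasDerivAt (fun z : ℂ => 1 - z) (-1) z := by
      simpa using (hasDerivAt_id z).const_sub 1
    have hg : HasDerivAt (fun z : ℂ => (1+x*z)/(1-z))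
        ((x*(1-z) - (1+x*z)*(-1))/(1-z)^2) z := h1.div h2 hz1
    have hfd : HasDerivAt f (α * v^(α-1) * ((x*(1-z) - (1+x*z)*(-1))/(1-z)^2)) z :=
      hg.cpow_const hslit
    rw [hfd.deriv]
    have hcp : v^α = v^(α-1) * v := by
      calc v^α = v^(α-1+1) := by ring_nf
        _ = v^(α-1)*v^(1:ℂ) := Complex.cpow_add _ _ hvne
        _ = v^(α-1)*v := by rw [Complex.cpow_one]
    have hfz : f z = v^α := rfl
    rw [hfz, hcp, hv]
    field_simp
    ring
  -- combined coefficient sequence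
  set E : ℕ → ℂ := fun n =>
    ((n:ℂ)+1) * A (n+1) + (x-1)*(n:ℂ)*A n - x*((n-1 : ℕ):ℂ)*A (n-1) with hE
  have hEsum : ∀ᶠ z in nhds (0:ℂ), HasSum (fun n => E n * z^n) (α*(1+x) * f z) := by
    filter_upwards [hD, hfe] with z hDz hfez
    have hS1 : HasSum (fun (n:ℕ) => (x-1)*(n:ℂ)*A n * z^n) ((x-1)*z*deriv f z + 0) := by
      have m1 := hDz.mul_left ((x-1)*z)
      have e1 : (fun (n:ℕ) => (x-1)*((n:ℕ)+1:ℂ)*A (n+1) * z^(n+1))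
          = fun (n:ℕ) => (x-1)*z*(((n:ℂ)+1) * A (n+1) * z^n) := by
        funext n; ring
      have m1' : HasSum (fun (n:ℕ) => (x-1)*(((n+1):ℕ):ℂ)*A (n+1) * z^(n+1))
          ((x-1)*z*deriv f z) := by
        convert m1 using 2 with n
        · rfl
        push_cast
        ring
      have := (hasSum_nat_add_iff (f := fun (n:ℕ) => (x-1)*(n:ℂ)*A n * z^n) 1).mp m1'
      simpa using this
    have hS2 : HasSum (fun (n:ℕ) => x*((n-1 : ℕ):ℂ)*A (n-1) * z^n) (x*z^2*deriv f z + 0) := by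
      have m2 := hDz.mul_left (x*z^2)
      have m2' : HasSum (fun (n:ℕ) => x*(((n+2-1):ℕ):ℂ)*A (n+2-1) * z^(n+2))
          (x*z^2*deriv f z) := by
        convert m2 using 2 with n
        · rfl
        push_cast
        ring
      have := (hasSum_nat_add_iff (f := fun (n:ℕ) => x*((n-1:ℕ):ℂ)*A (n-1) * z^n) 2).mp m2'
      simpa [Finset.sum_range_succ] using this
    have comb := (hDz.add hS1).sub hS2
    have efun : (fun (n:ℕ) => (((n:ℂ)+1) * A (n+1) * z^n + (x-1)*(n:ℂ)*A n * z^n)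
        - x*((n-1 : ℕ):ℂ)*A (n-1) * z^n) = fun n => E n * z^n := by
      funext n
      rw [hE]
      ring
    rw [efun] at comb
    have eval : deriv f z + ((x-1)*z*deriv f z + 0) - (x*z^2*deriv f z + 0)
        = α*(1+x) * f z := by
      rw [← hfez]
      ring
    rwa [eval] at comb
  -- two power series for the same function
  have hP1 : HasFPowerSeriesAt (fun z => α*(1+x) * f z) (ofScalars ℂ E) 0 := by
    rw [hasFPowerSeriesAt_iff]
    filter_upwards [hEsum] with z hz
    simp only [hcoeff, smul_eq_mul, zero_add]
    convert hz using 2 with n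
    · rfl
    ring
  have hP2 : HasFPowerSeriesAt (fun z => α*(1+x) * f z)
      (ofScalars ℂ (fun n => α*(1+x)*A n)) 0 := by
    rw [hasFPowerSeriesAt_iff]
    filter_upwards [Metric.ball_mem_nhds (0:ℂ) one_pos] with z hz
    have hz' : ‖z‖ < 1 := by simpa [Complex.dist_eq] using hz
    have := (hA z hz').mul_left (α*(1+x))
    simp only [hcoeff, smul_eq_mul, zero_add]
    convert this using 2 with n
    · rfl
    ring
  have heq := hP1.eq_formalMultilinearSeries hP2
  have hEeq : E = fun n => α*(1+x)*A n :=
    FormalMultilinearSeries.ofScalars_series_injective ℂ ℂ heq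
  intro n
  have := congrFun hEeq n
  rw [hE] at this
  exact this


open CoeffAux in
theorem coeff_A_hypergeometric (x α : ℂ) (hx : ‖x‖ = 1) (hx1 : x ≠ -1)
    (A : ℕ → ℂ) (hA0 : A 0 = 1)
    (hA : ∀ z : ℂ, ‖z‖ < 1 →
      HasSum (fun n : ℕ => A n * z ^ n) (((1 + x * z) / (1 - z)) ^ α))
    (n : ℕ) (hn : 1 ≤ n) :
    A n = α * (1 + x) *
      ∑ k ∈ Finset.range n,
        ((∏ i ∈ Finset.range k, ((1 - n : ℂ) + i)) * (∏ i ∈ Finset.range k, ((1 - α) + i)) /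
          ((∏ i ∈ Finset.range k, ((2:ℂ) + i)) * (Nat.factorial k : ℂ))) * (1 + x) ^ k := by
  have hrec := hrec_main x α hx A hA
  have hA1 : A 1 = α * (1 + x) := by
    have h0 := hrec 0
    simp at h0
    rw [h0, hA0, mul_one]
  have hrec' : ∀ m : ℕ, ((m:ℂ)+2)*A (m+2) + (x-1)*((m:ℂ)+1)*A (m+1) - x*(m:ℂ)*A m
      = α*(1+x)*A (m+1) := by
    intro m
    have := hrec (m+1)
    push_cast at this ⊢
    convert this using 3 <;> push_cast <;> ring
  have hAB := A_eq_B α x A hA0 hA1 hrec' n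
  rw [hAB]
  rw [B, if_neg (by omega : ¬ n = 0)]
  congr 1
end

section
/- Let D(x) = 1/((1+x)(1 − (−x̄)^α)) for x = e^{iγ}, 0 < γ < π, α ∈ (1,2], with (−x̄)^α = e^{iα(π−γ)} ≠ 1. Then Re D(x) = 1/4 + tan(γ/2)/(4 tan(α(π−γ)/2)), provided tan(α(π−γ)/2) is defined and nonzero. -/
open Complex Real

theorem re_D_formula (γ α : ℝ) (hγ0 : 0 < γ) (hγπ : γ < π)
    (hα1 : 1 < α) (hα2 : α ≤ 2)
    (hw : Complex.exp ((α * (π - γ)) * Complex.I) ≠ 1)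
    (hcos : Real.cos (α * (π - γ) / 2) ≠ 0)
    (htan : Real.tan (α * (π - γ) / 2) ≠ 0) :
    (1 / ((1 + Complex.exp (γ * Complex.I)) *
        (1 - Complex.exp ((α * (π - γ)) * Complex.I)))).re =
      1 / 4 + Real.tan (γ / 2) / (4 * Real.tan (α * (π - γ) / 2)) := by
  set b : ℝ := α * (π - γ) with hb
  -- half angles
  have hsind : Real.sin (b / 2) ≠ 0 := by
    intro h
    apply htan
    rw [Real.tan_eq_sin_div_cos, h, zero_div]
  have hcosc : Real.cos (γ / 2) ≠ 0 := by
    have : 0 < Real.cos (γ / 2) :=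
      Real.cos_pos_of_mem_Ioo ⟨by linarith [Real.pi_pos], by linarith⟩
    linarith
  have e1 : Complex.exp (↑γ * Complex.I) =
      ↑(Real.cos γ) + ↑(Real.sin γ) * Complex.I := by
    rw [Complex.exp_mul_I, Complex.ofReal_cos, Complex.ofReal_sin]
  have e2 : Complex.exp (↑b * Complex.I) =
      ↑(Real.cos b) + ↑(Real.sin b) * Complex.I := by
    rw [Complex.exp_mul_I, Complex.ofReal_cos, Complex.ofReal_sin]
  have hbc : ((α:ℂ) * ((π:ℂ) - (γ:ℂ))) = (b:ℂ) := by rw [hb]; push_cast; ring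
  rw [hbc, e1, e2]
  -- abbreviations for half-angle values
  have hcg : Real.cos γ = 2 * Real.cos (γ / 2) ^ 2 - 1 := by
    rw [show γ = 2 * (γ / 2) by ring, Real.cos_two_mul]; ring_nf
  have hsg : Real.sin γ = 2 * Real.sin (γ / 2) * Real.cos (γ / 2) := by
    have := Real.sin_two_mul (γ / 2)
    rw [← this]; ring_nf
  have hcb : Real.cos b = 1 - 2 * Real.sin (b / 2) ^ 2 := by
    have h1 := Real.cos_two_mul (b / 2)
    have h2 := Real.sin_sq_add_cos_sq (b / 2)
    rw [show (2:ℝ) * (b / 2) = b by ring] at h1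
    linarith
  have hsb : Real.sin b = 2 * Real.sin (b / 2) * Real.cos (b / 2) := by
    have := Real.sin_two_mul (b / 2)
    rw [← this]; ring_nf
  set sc := Real.sin (γ / 2)
  set cc := Real.cos (γ / 2)
  set sd := Real.sin (b / 2)
  set cd := Real.cos (b / 2)
  have hpc : sc ^ 2 + cc ^ 2 = 1 := Real.sin_sq_add_cos_sq _
  have hpd : sd ^ 2 + cd ^ 2 = 1 := Real.sin_sq_add_cos_sq _
  rw [Real.tan_eq_sin_div_cos, Real.tan_eq_sin_div_cos]
  rw [one_div, Complex.inv_re]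
  simp only [Complex.normSq_apply, Complex.mul_re, Complex.mul_im,
    Complex.add_re, Complex.add_im, Complex.sub_re, Complex.sub_im,
    Complex.one_re, Complex.one_im, Complex.ofReal_re, Complex.ofReal_im,
    Complex.I_re, Complex.I_im, mul_one, mul_zero]
  rw [hcg, hsg, hcb, hsb]
  have hDeq : ((1 + (2 * cc ^ 2 - 1 + (0 - 0))) * (1 - (1 - 2 * sd ^ 2 + (0 - 0))) -
            (0 + (0 + (2 * sc * cc + 0))) * (0 - (0 + (2 * sd * cd + 0)))) *
          ((1 + (2 * cc ^ 2 - 1 + (0 - 0))) * (1 - (1 - 2 * sd ^ 2 + (0 - 0))) -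
            (0 + (0 + (2 * sc * cc + 0))) * (0 - (0 + (2 * sd * cd + 0)))) +
        ((1 + (2 * cc ^ 2 - 1 + (0 - 0))) * (0 - (0 + (2 * sd * cd + 0))) +
            (0 + (0 + (2 * sc * cc + 0))) * (1 - (1 - 2 * sd ^ 2 + (0 - 0)))) *
          ((1 + (2 * cc ^ 2 - 1 + (0 - 0))) * (0 - (0 + (2 * sd * cd + 0))) +
            (0 + (0 + (2 * sc * cc + 0))) * (1 - (1 - 2 * sd ^ 2 + (0 - 0)))) =
      16 * cc ^ 2 * sd ^ 2 := by
    linear_combination (16 * cc ^ 2 * sd ^ 2 * (sd ^ 2 + cd ^ 2)) * hpc +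
      (16 * cc ^ 2 * sd ^ 2) * hpd
  rw [hDeq]
  have h16 : (16:ℝ) * cc ^ 2 * sd ^ 2 ≠ 0 := by positivity
  rw [show Real.sin (γ / 2) = sc from rfl, show Real.cos (γ / 2) = cc from rfl,
    show Real.sin (b / 2) = sd from rfl, show Real.cos (b / 2) = cd from rfl]
  field_simp
  ring
end
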